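/- (Criterion for ε-proper efficiency.) Let X ⊆ ℝ^n be nonempty, f : ℝ^n → ℝ^m with components f_1,…,f_m, K = ℝ^m_+, and ε ∈ ℝ^m_+. For x̄ ∈ X the following are equivalent: (i) x̄ is an ε-properly efficient solution; (ii) cl cone[f(X) + ℝ^m_+ − (f(x̄) − ε)] ∩ (−ℝ^m_+) = {0}; (iii) cl cone[f(X) − (f(x̄) − ε)] ∩ (−ℝ^m_+) = {0}. -/
import Mathlib


open Set Pointwise Filter Topology

/-- The smallest cone containing `D`: `cone D = {t • d : t ≥ 0, d ∈ D}`. -/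
def coneGen {E : Type*} [AddCommGroup E] [Module ℝ E] (D : Set E) : Set E :=
  {x | ∃ t : ℝ, 0 ≤ t ∧ ∃ d ∈ D, x = t • d}

/-- The nonnegative orthant `ℝ^m_+`. -/
def orthant (m : ℕ) : Set (Fin m → ℝ) := {x | ∀ i, 0 ≤ x i}

/-- `xbar` is an ε-efficient solution of the problem `min_K f(x) s.t. x ∈ X`, with the
ordering cone `K = ℝ^m_+`: `xbar ∈ X` and there is no `y ∈ X` with
`f(y) ≤ f(xbar) - ε` and `f(y) ≠ f(xbar) - ε`. -/
def IsEpsEff {n m : ℕ} (X : Set (Fin n → ℝ)) (f : (Fin n → ℝ) → (Fin m → ℝ))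
    (ε : Fin m → ℝ) (xbar : Fin n → ℝ) : Prop :=
  xbar ∈ X ∧ ¬ ∃ y ∈ X, f xbar - ε - f y ∈ orthant m ∧ f y ≠ f xbar - ε

/-- `xbar` is an ε-properly efficient solution (in the sense of Li and Wang / Liu, a
Geoffrion-type notion) of the problem `min f(x) s.t. x ∈ X` with ordering cone `ℝ^m_+`. -/
def IsEpsProperEff {n m : ℕ} (X : Set (Fin n → ℝ)) (f : (Fin n → ℝ) → (Fin m → ℝ))
    (ε : Fin m → ℝ) (xbar : Fin n → ℝ) : Prop :=
  IsEpsEff X f ε xbar ∧ ∃ M : ℝ, 0 < M ∧ ∀ i : Fin m, ∀ x ∈ X,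
    f x i < f xbar i - ε i → ∃ j : Fin m, f xbar j - ε j < f x j ∧
      (f xbar i - f x i - ε i) / (f x j - f xbar j + ε j) ≤ M

lemma zero_mem_coneGen {E : Type*} [AddCommGroup E] [Module ℝ E] {D : Set E}
    (hD : D.Nonempty) : 0 ∈ coneGen D := by
  obtain ⟨d, hd⟩ := hD
  exact ⟨0, le_rfl, d, hd, (zero_smul ℝ d).symm⟩

lemma coneGen_mono {E : Type*} [AddCommGroup E] [Module ℝ E] {C D : Set E}
    (h : C ⊆ D) : coneGen C ⊆ coneGen D := by
  rintro x ⟨t, ht, d, hd, rfl⟩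
  exact ⟨t, ht, d, h hd, rfl⟩

lemma key1 {n m : ℕ} (X : Set (Fin n → ℝ)) (f : (Fin n → ℝ) → (Fin m → ℝ))
    (ε : Fin m → ℝ) (xbar : Fin n → ℝ) (hxbar : xbar ∈ X)
    (h : IsEpsProperEff X f ε xbar) :
    closure (coneGen (((fun x => f x - (f xbar - ε)) '' X) + orthant m)) ∩ (-(orthant m))
      = {0} := by
  obtain ⟨_, M, hM, hprop⟩ := h
  set S : Set (Fin m → ℝ) := {z | ∀ i, -z i ≤ M * ∑ j, max (z j) 0} with hS_def
  have hS_closed : IsClosed S := by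
    have hrw : S = ⋂ i, {z : Fin m → ℝ | -z i ≤ M * ∑ j, max (z j) 0} := by
      ext z; simp [hS_def, Set.mem_iInter]
    rw [hrw]
    refine isClosed_iInter fun i => isClosed_le ((continuous_apply i).neg) ?_
    exact continuous_const.mul (continuous_finset_sum _ fun j _ =>
      (continuous_apply j).max continuous_const)
  have hsub : coneGen (((fun x => f x - (f xbar - ε)) '' X) + orthant m) ⊆ S := by
    rintro z ⟨t, ht, d, hd, rfl⟩
    rw [Set.mem_add] at hd
    obtain ⟨a, ha, u, hu, rfl⟩ := hd
    obtain ⟨x, hx, rfl⟩ := ha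
    intro i
    set z := t • ((f x - (f xbar - ε)) + u) with hz_def
    have hu' : ∀ j, 0 ≤ u j := hu
    have hsum_nonneg : 0 ≤ ∑ j, max (z j) 0 :=
      Finset.sum_nonneg fun j _ => le_max_right _ _
    have hzap : ∀ j, z j = t * ((f x j - (f xbar j - ε j)) + u j) := by
      intro j
      rw [hz_def]
      simp only [Pi.smul_apply, Pi.add_apply, Pi.sub_apply, smul_eq_mul]
    rcases eq_or_lt_of_le ht with rfl | ht'
    · have : z i = 0 := by rw [hzap]; ring
      rw [this]
      simpa using mul_nonneg hM.le hsum_nonneg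
    · by_cases hcase : f xbar i - ε i ≤ f x i
      · have hzi : 0 ≤ z i := by
          rw [hzap]
          have := hu' i
          nlinarith
        nlinarith [mul_nonneg hM.le hsum_nonneg]
      · push_neg at hcase
        obtain ⟨j, hj1, hj2⟩ := hprop i x hx hcase
        have hden : 0 < f x j - f xbar j + ε j := by linarith
        have hnum : f xbar i - f x i - ε i ≤ M * (f x j - f xbar j + ε j) :=
          (div_le_iff₀ hden).mp hj2
        have hjs : z j ≤ ∑ j', max (z j') 0 := by
          have h1 : max (z j) 0 ≤ ∑ j', max (z j') 0 :=
            Finset.single_le_sum (f := fun j' => max (z j') 0)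
              (fun j' _ => le_max_right _ _) (Finset.mem_univ j)
          exact (le_max_left _ _).trans h1
        calc -z i = t * ((f xbar i - ε i - f x i) - u i) := by rw [hzap]; ring
          _ ≤ t * (f xbar i - ε i - f x i) := by nlinarith [hu' i]
          _ ≤ t * (M * (f x j - f xbar j + ε j)) := by nlinarith
          _ = M * (t * (f x j - f xbar j + ε j)) := by ring
          _ ≤ M * (z j) := by
              refine mul_le_mul_of_nonneg_left ?_ hM.le
              rw [hzap]
              nlinarith [hu' j]
          _ ≤ M * ∑ j', max (z j') 0 := mul_le_mul_of_nonneg_left hjs hM.le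
  refine Set.eq_singleton_iff_unique_mem.mpr ⟨⟨?_, ?_⟩, ?_⟩
  · refine subset_closure (zero_mem_coneGen ?_)
    refine ⟨(fun x => f x - (f xbar - ε)) xbar + 0, Set.add_mem_add ⟨xbar, hxbar, rfl⟩ ?_⟩
    intro i; simp
  · intro i; simp
  · rintro z ⟨hz1, hz2⟩
    have hzS : z ∈ S := closure_minimal hsub hS_closed hz1
    have hz2' : ∀ i, 0 ≤ -z i := hz2
    have hsum0 : ∑ j, max (z j) 0 = 0 :=
      Finset.sum_eq_zero fun j _ => max_eq_right (by linarith [hz2' j])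
    funext i
    have := hzS i
    rw [hsum0] at this
    have := hz2' i
    simp only [Pi.zero_apply]
    linarith

lemma key2 {n m : ℕ} (X : Set (Fin n → ℝ)) (f : (Fin n → ℝ) → (Fin m → ℝ))
    (ε : Fin m → ℝ) (xbar : Fin n → ℝ) (hxbar : xbar ∈ X)
    (h : closure (coneGen ((fun x => f x - (f xbar - ε)) '' X)) ∩ (-(orthant m)) = {0}) :
    IsEpsProperEff X f ε xbar := by
  have hmem : ∀ z, z ∈ closure (coneGen ((fun x => f x - (f xbar - ε)) '' X)) →
      z ∈ -(orthant m) → z = 0 := by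
    intro z h1 h2
    have : z ∈ ({0} : Set (Fin m → ℝ)) := h ▸ ⟨h1, h2⟩
    simpa using this
  constructor
  · refine ⟨hxbar, ?_⟩
    rintro ⟨y, hy, hy1, hy2⟩
    have hy1' : ∀ i, 0 ≤ (f xbar - ε - f y) i := hy1
    have ha : f y - (f xbar - ε) ∈ coneGen ((fun x => f x - (f xbar - ε)) '' X) :=
      ⟨1, zero_le_one, _, ⟨y, hy, rfl⟩, (one_smul ℝ _).symm⟩
    have hneg : f y - (f xbar - ε) ∈ -(orthant m) := by
      rw [Set.mem_neg]
      intro i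
      have := hy1' i
      simp only [Pi.sub_apply, Pi.neg_apply] at *
      linarith
    have h0 := hmem _ (subset_closure ha) hneg
    exact hy2 (sub_eq_zero.mp h0)
  · by_contra hM
    push_neg at hM
    choose i x hxX hlt hrat using fun k : ℕ => hM ((k : ℝ) + 1) (by positivity)
    set a : ℕ → Fin m → ℝ := fun k => f (x k) - (f xbar - ε) with ha_def
    have hai : ∀ k, a k (i k) < 0 := by
      intro k
      have := hlt k
      simp only [ha_def, Pi.sub_apply]
      linarith
    have hane : ∀ k, a k ≠ 0 := by
      intro k hk
      have := hai k
      rw [hk] at this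
      simp at this
    have hs : ∀ k, 0 < ‖a k‖ := fun k => norm_pos_iff.mpr (hane k)
    set c : ℕ → Fin m → ℝ := fun k => (‖a k‖)⁻¹ • a k with hc_def
    have hcnorm : ∀ k, ‖c k‖ = 1 := by
      intro k
      rw [hc_def]
      simp only [norm_smul, norm_inv, norm_norm]
      exact inv_mul_cancel₀ (hs k).ne'
    have hc_cone : ∀ k, c k ∈ coneGen ((fun x => f x - (f xbar - ε)) '' X) := by
      intro k
      exact ⟨(‖a k‖)⁻¹, by positivity, a k, ⟨x k, hxX k, rfl⟩, rfl⟩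
    have hc_bound : ∀ k j, c k j ≤ 1 / ((k : ℝ) + 1) := by
      intro k j
      have hsk := hs k
      have hk1 : (0 : ℝ) < (k : ℝ) + 1 := by positivity
      have hcap : c k j = a k j / ‖a k‖ := by
        simp [hc_def, Pi.smul_apply, smul_eq_mul]
        ring
      rcases le_or_gt (a k j) 0 with hle | hpos
      · have h1 : a k j / ‖a k‖ ≤ 0 := div_nonpos_of_nonpos_of_nonneg hle (norm_nonneg _)
        rw [hcap]
        have : (0:ℝ) < 1 / ((k:ℝ)+1) := by positivity
        linarith
      · have hposj : f xbar j - ε j < f (x k) j := by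
          have := hpos
          simp only [ha_def, Pi.sub_apply] at this
          linarith
        have hgt := hrat k j hposj
        have hden : 0 < f (x k) j - f xbar j + ε j := by linarith
        have hkey : ((k : ℝ) + 1) * (f (x k) j - f xbar j + ε j)
            < f xbar (i k) - f (x k) (i k) - ε (i k) := by
          rw [← lt_div_iff₀ hden]
          exact hgt
        have habs : f xbar (i k) - f (x k) (i k) - ε (i k) ≤ ‖a k‖ := by
          have h1 : ‖a k (i k)‖ ≤ ‖a k‖ := norm_le_pi_norm (a k) (i k)
          rw [Real.norm_eq_abs] at h1
          have h2 : a k (i k) = f (x k) (i k) - (f xbar (i k) - ε (i k)) := by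
            simp [ha_def, Pi.sub_apply]
          rw [h2] at h1
          have h4 : -(f (x k) (i k) - (f xbar (i k) - ε (i k))) ≤ ‖a k‖ :=
            (neg_le_abs _).trans h1
          linarith
        have haj : a k j = f (x k) j - f xbar j + ε j := by
          simp [ha_def, Pi.sub_apply]; ring
        rw [hcap, div_le_div_iff₀ hsk hk1]
        rw [haj]
        nlinarith
    have hmemIcc : ∀ k, c k ∈ Set.Icc (-1 : Fin m → ℝ) 1 := by
      intro k
      rw [Set.mem_Icc]
      constructor <;> intro j <;>
      · have h1 : ‖c k j‖ ≤ ‖c k‖ := norm_le_pi_norm (c k) j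
        rw [hcnorm k, Real.norm_eq_abs] at h1
        have := abs_le.mp h1
        simp only [Pi.neg_apply, Pi.one_apply]
        linarith [this.1, this.2]
    obtain ⟨cl, -, φ, hφ, htend⟩ := (isCompact_Icc).tendsto_subseq hmemIcc
    have hclosure : cl ∈ closure (coneGen ((fun x => f x - (f xbar - ε)) '' X)) :=
      mem_closure_of_tendsto htend (Filter.Eventually.of_forall fun l => hc_cone (φ l))
    have hclneg : cl ∈ -(orthant m) := by
      rw [Set.mem_neg]
      intro j
      have hev : Tendsto (fun l => c (φ l) j) atTop (𝓝 (cl j)) :=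
        ((continuous_apply j).tendsto cl).comp htend
      have hbnd : Tendsto (fun l : ℕ => 1 / ((φ l : ℝ) + 1)) atTop (𝓝 0) :=
        tendsto_one_div_add_atTop_nhds_zero_nat.comp hφ.tendsto_atTop
      have hle : cl j ≤ 0 :=
        le_of_tendsto_of_tendsto' hev hbnd fun l => hc_bound (φ l) j
      simp only [Pi.neg_apply]
      linarith
    have hcl0 := hmem cl hclosure hclneg
    have hn : Tendsto (fun l => ‖c (φ l)‖) atTop (𝓝 ‖cl‖) :=
      (continuous_norm.tendsto cl).comp htend
    have heq : (fun l => ‖c (φ l)‖) = fun _ => (1 : ℝ) := funext fun l => hcnorm _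
    rw [heq] at hn
    have : ‖cl‖ = 1 := tendsto_nhds_unique hn tendsto_const_nhds
    rw [hcl0] at this
    simp at this

/-- Criterion for ε-proper efficiency: for `xbar ∈ X`, the following are equivalent:
(i) `xbar` is ε-properly efficient; (ii) `cl cone [f(X) + ℝ^m_+ - (f(xbar) - ε)] ∩ (-ℝ^m_+) = {0}`;
(iii) `cl cone [f(X) - (f(xbar) - ε)] ∩ (-ℝ^m_+) = {0}`. -/
theorem stmt_5 {n m : ℕ} (X : Set (Fin n → ℝ)) (hX : X.Nonempty)
    (f : (Fin n → ℝ) → (Fin m → ℝ))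
    (ε : Fin m → ℝ) (hε : ∀ i, 0 ≤ ε i)
    (xbar : Fin n → ℝ) (hxbar : xbar ∈ X) :
    (IsEpsProperEff X f ε xbar ↔
      closure (coneGen (((fun x => f x - (f xbar - ε)) '' X) + orthant m)) ∩ (-(orthant m))
        = {0}) ∧
    (IsEpsProperEff X f ε xbar ↔
      closure (coneGen ((fun x => f x - (f xbar - ε)) '' X)) ∩ (-(orthant m)) = {0}) := by
  have h0orth : (0 : Fin m → ℝ) ∈ orthant m := fun i => le_rfl
  have hAne : ((fun x => f x - (f xbar - ε)) '' X).Nonempty := ⟨_, xbar, hxbar, rfl⟩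
  have h0 : (0 : Fin m → ℝ) ∈ closure (coneGen ((fun x => f x - (f xbar - ε)) '' X))
      ∩ (-(orthant m)) := by
    refine ⟨subset_closure (zero_mem_coneGen hAne), ?_⟩
    rw [Set.mem_neg]
    intro i; simp
  have hmono : closure (coneGen ((fun x => f x - (f xbar - ε)) '' X)) ⊆
      closure (coneGen (((fun x => f x - (f xbar - ε)) '' X) + orthant m)) := by
    refine closure_mono (coneGen_mono ?_)
    intro a ha
    simpa using Set.add_mem_add ha h0orth
  constructor
  · constructor
    · exact key1 X f ε xbar hxbar
    · intro h2
      apply key2 X f ε xbar hxbar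
      refine Subset.antisymm ?_ (Set.singleton_subset_iff.mpr h0)
      intro z hz
      rw [← h2]
      exact ⟨hmono hz.1, hz.2⟩
  · constructor
    · intro h1
      refine Subset.antisymm ?_ (Set.singleton_subset_iff.mpr h0)
      intro z hz
      rw [← key1 X f ε xbar hxbar h1]
      exact ⟨hmono hz.1, hz.2⟩
    · exact key2 X f ε xbar hxbar
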